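/- Let p be an odd prime, γ a self-conjugate p-core, and B_γ the block of partitions of |γ| + 2p with p-core γ. For every 0 ≤ l ≤ p−1, any two partitions in ∂_l are comparable in the dominance order; that is, ∂_l is totally ordered by ⊴. -/
import Mathlib


namespace ArxivW2

/-- A partition of a natural number, given by its (weakly decreasing, finitely
supported) sequence of parts, `part i` being the `(i+1)`-st part. -/
structure PartitionNat : Type where
  part : ℕ → ℕ
  antitone : Antitone part
  finite_support : (Function.support part).Finite

namespace PartitionNat

/-- The rank `|λ|` of a partition: the sum of its parts. -/
noncomputable def size (μ : PartitionNat) : ℕ := ∑ᶠ i, μ.part i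

/-- The number of nonzero parts of a partition. -/
noncomputable def len (μ : PartitionNat) : ℕ := (Function.support μ.part).ncard

/-- The `(j+1)`-st part of the conjugate partition: `λ'_{j+1} = #{i : λ_i ≥ j+1}`. -/
noncomputable def conj (μ : PartitionNat) (j : ℕ) : ℕ := {i : ℕ | j + 1 ≤ μ.part i}.ncard

/-- A partition is self-conjugate if it equals its conjugate. -/
def SelfConj (μ : PartitionNat) : Prop := ∀ j, μ.part j = μ.conj j

/-- `(i, j)` (0-indexed) is a node of the Young diagram of `μ`. -/
def IsNode (μ : PartitionNat) (i j : ℕ) : Prop := j < μ.part i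

/-- The hook length of the (0-indexed) node `(i,j)`:
`h = λ_{i+1} + λ'_{j+1} − (i+1) − (j+1) + 1`. -/
noncomputable def hook (μ : PartitionNat) (i j : ℕ) : ℕ := μ.part i + μ.conj j - (i + j + 1)

/-- A partition is a `p`-core if no hook length of a node is divisible by `p`. -/
def IsCore (p : ℕ) (μ : PartitionNat) : Prop := ∀ i j, μ.IsNode i j → ¬ p ∣ μ.hook i j

/-- The `p`-weight of a partition: the number of nodes whose hook length is
divisible by `p`. -/
noncomputable def pweight (p : ℕ) (μ : PartitionNat) : ℕ :=
  {x : ℕ × ℕ | μ.IsNode x.1 x.2 ∧ p ∣ μ.hook x.1 x.2}.ncard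

/-- The `N`-bead beta-set `B_N(λ) = {λ_i + N − i : 1 ≤ i ≤ N}` of a partition
(meaningful when `N ≥ len λ`). -/
def betaSet (N : ℕ) (μ : PartitionNat) : Finset ℕ :=
  (Finset.range N).image fun i => μ.part i + (N - 1 - i)

/-- A partition is `p`-regular if no nonzero part is repeated `p` or more times. -/
def Regular (p : ℕ) (μ : PartitionNat) : Prop :=
  ∀ i, μ.part i ≠ 0 → μ.part (i + p - 1) < μ.part i

end PartitionNat

open PartitionNat

/-- `γ` is the `p`-core of `lam`: `γ` is a `p`-core, and for some `N` at least the
number of parts of both, the `N`-bead beta-sets of `lam` and `γ` have the same number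
of elements in each residue class mod `p`. -/
def HasCore (p : ℕ) (lam gam : PartitionNat) : Prop :=
  IsCore p gam ∧ ∃ N : ℕ, lam.len ≤ N ∧ gam.len ≤ N ∧ ∀ r : ℕ,
    ((betaSet N lam).filter fun b => b % p = r).card =
      ((betaSet N gam).filter fun b => b % p = r).card

/-- Membership in the `p`-block of weight `w` with `p`-core `gam`. -/
def InBlock (p w : ℕ) (gam lam : PartitionNat) : Prop :=
  lam.size = gam.size + w * p ∧ HasCore p lam gam

/-- The dominance order: `lam ⊴ mu`. -/
def Dom (lam mu : PartitionNat) : Prop :=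
  ∀ k : ℕ, ∑ i ∈ Finset.range k, lam.part i ≤ ∑ i ∈ Finset.range k, mu.part i

/-- `mu` is obtained from `lam` by removing a `p`-rim-hook of leg length `l`. -/
def RemoveHook (p : ℕ) (lam mu : PartitionNat) (l : ℕ) : Prop :=
  ∃ N b : ℕ, lam.len ≤ N ∧ mu.len ≤ N ∧ b ∈ betaSet N lam ∧ p ≤ b ∧
    b - p ∉ betaSet N lam ∧
    betaSet N mu = insert (b - p) (betaSet N lam \ {b}) ∧
    l = ((betaSet N lam).filter fun x => b - p < x ∧ x < b).card

/-- `lam` belongs to the set `∂_l` of the weight-2 block of `gam`: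
it lies in the block and some (equivalently, every) two-step `p`-rim-hook removal
sequence from `lam` down to `gam` has leg lengths `l₁, l₂` with `|l₁ − l₂| = l`. -/
def DelClass (p : ℕ) (gam : PartitionNat) (l : ℕ) (lam : PartitionNat) : Prop :=
  InBlock p 2 gam lam ∧ ∃ mu l1 l2, RemoveHook p lam mu l1 ∧ RemoveHook p mu gam l2 ∧
    max l1 l2 - min l1 l2 = l

/-- `ρ 0 < ρ 1 < ⋯ < ρ (p−1)` is the increasing enumeration of the maxima of the
residue classes mod `p` in the `N`-bead beta-set of `gam`. -/
def IsRho (p N : ℕ) (gam : PartitionNat) (ρ : ℕ → ℕ) : Prop :=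
  (∀ i j, i < j → j < p → ρ i < ρ j) ∧
  (∀ i, i < p → ρ i ∈ betaSet N gam ∧ ∀ b ∈ betaSet N gam, b % p = ρ i % p → b ≤ ρ i) ∧
  (∀ r, r < p → ∃ i, i < p ∧ ρ i % p = r)

/-- The beta-set of the partition `⟨i,j⟩` (`i < j`). -/
def pairBeta (p : ℕ) (B : Finset ℕ) (ρ : ℕ → ℕ) (i j : ℕ) : Finset ℕ :=
  (B \ {ρ i, ρ j}) ∪ {ρ i + p, ρ j + p}

/-- The beta-set of the partition `⟨i⟩`. -/
def oneBeta (p : ℕ) (B : Finset ℕ) (ρ : ℕ → ℕ) (i : ℕ) : Finset ℕ :=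
  (B \ {ρ i}) ∪ {ρ i + 2 * p}

/-- The beta-set of the partition `⟨i²⟩`. -/
def sqBeta (p : ℕ) (B : Finset ℕ) (ρ : ℕ → ℕ) (i : ℕ) : Finset ℕ :=
  (B \ {ρ i - p}) ∪ {ρ i + p}

/-- The pyramid entry `γ_{ij}` of the block, extended by `1` for `i > j` and `0`
for `j ≥ p`. -/
def pyr (p : ℕ) (ρ : ℕ → ℕ) (i j : ℕ) : ℕ :=
  if j < i then 1 else if p ≤ j then 0 else if ρ j - ρ i < p then 1 else 0

/-- The beta-set of Fayers' partition `⌈i,j⌋` (for `0 ≤ i ≤ j ≤ p−1`, `i < p−1`),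
defined by cases on the pyramid entries. -/
def fayersBeta (p : ℕ) (B : Finset ℕ) (ρ : ℕ → ℕ) (i j : ℕ) : Finset ℕ :=
  if i = j then
    (if pyr p ρ (i + 1) (i + 2) = 1 then pairBeta p B ρ (i + 1) (i + 2)
     else oneBeta p B ρ (i + 1))
  else
    if pyr p ρ i (j + 1) = 1 then pairBeta p B ρ i (j + 1)
    else if pyr p ρ i j = 1 then oneBeta p B ρ i
    else if pyr p ρ (i + 1) j = 1 then sqBeta p B ρ j
    else pairBeta p B ρ (i + 1) j

/-- The set of `p`-BG-partitions in the block of weight `w` with core `gam`: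
self-conjugate partitions in the block none of whose diagonal hook lengths is
divisible by `p`. -/
def BGset (p w : ℕ) (gam : PartitionNat) : Set PartitionNat :=
  {lam | InBlock p w gam lam ∧ SelfConj lam ∧ ∀ i, lam.IsNode i i → ¬ p ∣ lam.hook i i}


section Dev
open PartitionNat Finset

variable {p N : ℕ} {μ lam mu : PartitionNat}

lemma lt_len_of_part_ne (μ : PartitionNat) {i : ℕ} (h : μ.part i ≠ 0) : i < μ.len := by
  have hsub : (↑(Finset.range (i+1)) : Set ℕ) ⊆ Function.support μ.part := by
    intro j hj
    simp only [Finset.coe_range, Set.mem_Iio] at hj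
    have := μ.antitone (Nat.le_of_lt_succ hj)
    simp only [Function.mem_support]
    omega
  have h2 := Set.ncard_le_ncard hsub μ.finite_support
  rw [Set.ncard_coe_finset, Finset.card_range] at h2
  exact lt_of_lt_of_le (Nat.lt_succ_self i) h2

lemma part_eq_zero (μ : PartitionNat) {N i : ℕ} (hN : μ.len ≤ N) (hi : N ≤ i) :
    μ.part i = 0 := by
  by_contra h
  have := lt_len_of_part_ne μ h
  omega

lemma mem_betaSet {x : ℕ} : x ∈ betaSet N μ ↔ ∃ i < N, μ.part i + (N - 1 - i) = x := by
  simp [betaSet]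

lemma beta_lt {i j : ℕ} (hj : j < N) (hij : i < j) :
    μ.part j + (N - 1 - j) < μ.part i + (N - 1 - i) := by
  have := μ.antitone (le_of_lt hij)
  omega

lemma beta_injOn : Set.InjOn (fun i => μ.part i + (N - 1 - i)) ↑(Finset.range N) := by
  intro i hi j hj hij
  simp only [Finset.coe_range, Set.mem_Iio] at hi hj
  have hij' : μ.part i + (N - 1 - i) = μ.part j + (N - 1 - j) := hij
  rcases lt_trichotomy i j with h | h | h
  · have := beta_lt (μ := μ) hj h; omega
  · exact h
  · have := beta_lt (μ := μ) hi h; omega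

lemma card_betaSet : (betaSet N μ).card = N := by
  rw [betaSet, Finset.card_image_of_injOn beta_injOn, Finset.card_range]

lemma betaSet_succ (hN : μ.len ≤ N) :
    betaSet (N+1) μ = insert 0 ((betaSet N μ).image (· + 1)) := by
  rw [betaSet, Finset.range_add_one, Finset.image_insert]
  have h0 : μ.part N + (N + 1 - 1 - N) = 0 := by
    have := part_eq_zero μ hN (le_refl N); omega
  rw [h0]
  congr 1
  rw [betaSet, Finset.image_image]
  apply Finset.image_congr
  intro i hi
  simp only [Finset.mem_coe, Finset.mem_range] at hi
  simp only [Function.comp_apply]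
  omega

lemma mem_betaSet_succ (hN : μ.len ≤ N) {x : ℕ} :
    x ∈ betaSet (N+1) μ ↔ x = 0 ∨ (1 ≤ x ∧ x - 1 ∈ betaSet N μ) := by
  rw [betaSet_succ hN]
  simp only [Finset.mem_insert, Finset.mem_image]
  constructor
  · rintro (h | ⟨a, ha, rfl⟩)
    · exact Or.inl h
    · exact Or.inr ⟨by omega, by simpa using ha⟩
  · rintro (h | ⟨h1, h2⟩)
    · exact Or.inl h
    · exact Or.inr ⟨x - 1, h2, by omega⟩

/-- The data of a single `p`-rim-hook removal at bead number `N`. -/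
def HookData (p : ℕ) (lam mu : PartitionNat) (l N b : ℕ) : Prop :=
  lam.len ≤ N ∧ mu.len ≤ N ∧ b ∈ betaSet N lam ∧ p ≤ b ∧
    b - p ∉ betaSet N lam ∧
    betaSet N mu = insert (b - p) (betaSet N lam \ {b}) ∧
    l = ((betaSet N lam).filter fun x => b - p < x ∧ x < b).card

lemma removeHook_iff {l : ℕ} :
    RemoveHook p lam mu l ↔ ∃ N b, HookData p lam mu l N b := Iff.rfl

lemma HookData.succ {l N b : ℕ} (hp : 0 < p) (h : HookData p lam mu l N b) :
    HookData p lam mu l (N+1) (b+1) := by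
  obtain ⟨h1, h2, h3, h4, h5, h6, h7⟩ := h
  refine ⟨by omega, by omega, ?_, by omega, ?_, ?_, ?_⟩
  · rw [mem_betaSet_succ h1]
    exact Or.inr ⟨by omega, by simpa using h3⟩
  · rw [mem_betaSet_succ h1]
    push_neg
    refine ⟨by omega, fun _ => ?_⟩
    have : b + 1 - p - 1 = b - p := by omega
    rw [this]; exact h5
  · ext x
    rw [mem_betaSet_succ h2, Finset.mem_insert, Finset.mem_sdiff, Finset.mem_singleton,
      mem_betaSet_succ h1]
    have hmu : ∀ y, y ∈ betaSet N mu ↔ (y = b - p ∨ (y ∈ betaSet N lam ∧ y ≠ b)) := by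
      intro y
      rw [h6, Finset.mem_insert, Finset.mem_sdiff, Finset.mem_singleton]
    constructor
    · rintro (rfl | ⟨hx1, hx2⟩)
      · right
        exact ⟨Or.inl rfl, by omega⟩
      · rw [hmu] at hx2
        rcases hx2 with h' | ⟨h', h''⟩
        · left; omega
        · right; refine ⟨Or.inr ⟨hx1, h'⟩, by omega⟩
    · rintro (h' | ⟨(h' | ⟨h1', h2'⟩), hne⟩)
      · right
        refine ⟨by omega, ?_⟩
        rw [hmu]
        left; omega
      · left; exact h'
      · right
        refine ⟨by omega, ?_⟩
        rw [hmu]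
        right
        exact ⟨h2', by omega⟩
  · rw [h7, betaSet_succ h1, Finset.filter_insert]
    rw [if_neg (by omega)]
    have himg : ((betaSet N lam).image (· + 1)).filter (fun x => b + 1 - p < x ∧ x < b + 1)
        = ((betaSet N lam).filter (fun x => b - p < x ∧ x < b)).image (· + 1) := by
      rw [Finset.filter_image]
      congr 1
      apply Finset.filter_congr
      intro y _
      constructor <;> intro h' <;> [skip; skip] <;>
        exact ⟨by omega, by omega⟩
    rw [himg, Finset.card_image_of_injective _ (fun a b' h' => by omega)]

lemma HookData.mono {l N b : ℕ} (hp : 0 < p) (h : HookData p lam mu l N b) :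
    ∀ N', N ≤ N' → ∃ b', HookData p lam mu l N' b' := by
  intro N' hN'
  induction N', hN' using Nat.le_induction with
  | base => exact ⟨b, h⟩
  | succ n hn ih =>
    obtain ⟨b', hb'⟩ := ih
    exact ⟨b' + 1, hb'.succ hp⟩

lemma filter_lt_beta_card {i : ℕ} (hi : i < N) :
    ((betaSet N μ).filter (fun x => x < μ.part i + (N - 1 - i))).card = N - 1 - i := by
  rw [betaSet, Finset.filter_image]
  have hfc : (Finset.range N).filter (fun j => μ.part j + (N - 1 - j) < μ.part i + (N - 1 - i))
      = (Finset.range N).filter (fun j => i < j) := by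
    apply Finset.filter_congr
    intro j hj
    simp only [Finset.mem_range] at hj
    constructor
    · intro h
      by_contra hle
      push_neg at hle
      rcases Nat.lt_or_ge j i with h' | h'
      · have := beta_lt (μ := μ) hi h'; omega
      · have hji : j = i := by omega
        subst hji
        omega
    · intro h
      exact beta_lt hj h
  rw [hfc]
  rw [Finset.card_image_of_injOn (beta_injOn.mono (by intro x hx; simp at hx ⊢; exact hx.1))]
  have : (Finset.range N).filter (fun j => i < j) = Finset.Ioo i N := by
    ext j; simp [Finset.mem_Ioo, Finset.mem_range]; omega
  rw [this, Nat.card_Ioo]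
  omega

lemma range_filter_mem_card {i : ℕ} (hi : i < N) :
    ((Finset.range (μ.part i + (N - 1 - i))).filter (fun y => y ∈ betaSet N μ)).card
      = N - 1 - i := by
  have heq : (Finset.range (μ.part i + (N - 1 - i))).filter (fun y => y ∈ betaSet N μ)
      = (betaSet N μ).filter (fun x => x < μ.part i + (N - 1 - i)) := by
    ext y
    simp only [Finset.mem_filter, Finset.mem_range]
    tauto
  rw [heq, filter_lt_beta_card (μ := μ) hi]

lemma part_eq_gap_card {i : ℕ} (hi : i < N) :
    μ.part i = ((Finset.range (μ.part i + (N - 1 - i))).filter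
      (fun y => y ∉ betaSet N μ)).card := by
  have h1 := range_filter_mem_card (μ := μ) hi
  have h2 := Finset.card_filter_add_card_filter_not
    (s := Finset.range (μ.part i + (N - 1 - i))) (p := (fun y => y ∈ betaSet N μ))
  simp only [Finset.card_range] at h2
  omega

lemma gap_charac {c j : ℕ} (hc : c ∉ betaSet N μ)
    (hj : j = ((Finset.range c).filter (fun y => y ∉ betaSet N μ)).card) :
    ∀ y, j + 1 ≤ ((Finset.range y).filter (fun x => x ∉ betaSet N μ)).card ↔ c < y := by
  intro y
  constructor
  · intro h
    by_contra hy
    push_neg at hy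
    have hsub : (Finset.range y).filter (fun x => x ∉ betaSet N μ) ⊆
        (Finset.range c).filter (fun x => x ∉ betaSet N μ) :=
      Finset.filter_subset_filter _ (Finset.range_subset_range.2 hy)
    have := Finset.card_le_card hsub
    omega
  · intro h
    have hstep : ((Finset.range (c+1)).filter (fun x => x ∉ betaSet N μ)).card = j + 1 := by
      rw [Finset.range_add_one, Finset.filter_insert, if_pos hc,
        Finset.card_insert_of_notMem (by simp)]
      omega
    have hsub : (Finset.range (c+1)).filter (fun x => x ∉ betaSet N μ) ⊆
        (Finset.range y).filter (fun x => x ∉ betaSet N μ) :=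
      Finset.filter_subset_filter _ (Finset.range_subset_range.2 h)
    have := Finset.card_le_card hsub
    omega

lemma conj_spec (hN : μ.len ≤ N) {c : ℕ} (hc : c ∉ betaSet N μ) :
    μ.conj (((Finset.range c).filter (fun y => y ∉ betaSet N μ)).card)
      = ((betaSet N μ).filter (fun x => c < x)).card := by
  set j := ((Finset.range c).filter (fun y => y ∉ betaSet N μ)).card with hj
  have hset : {i : ℕ | j + 1 ≤ μ.part i}
      = ↑((Finset.range N).filter (fun i => j + 1 ≤ μ.part i)) := by
    ext i
    simp only [Set.mem_setOf_eq, Finset.coe_filter, Finset.mem_range]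
    constructor
    · intro h
      refine ⟨?_, h⟩
      have : μ.part i ≠ 0 := by omega
      have := lt_len_of_part_ne μ this
      omega
    · tauto
  rw [PartitionNat.conj, hset, Set.ncard_coe_finset]
  rw [betaSet, Finset.filter_image,
    Finset.card_image_of_injOn (beta_injOn.mono (by intro x hx; simp at hx ⊢; exact hx.1))]
  congr 1
  apply Finset.filter_congr
  intro i hi
  simp only [Finset.mem_range] at hi
  have hg := gap_charac (μ := μ) hc hj (μ.part i + (N - 1 - i))
  have hp2 := part_eq_gap_card (μ := μ) hi
  rw [← hg]
  omega
lemma betaSet_closed {γ : PartitionNat} (hp : 0 < p) (hγ : IsCore p γ) (hN : γ.len ≤ N) :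
    ∀ b ∈ betaSet N γ, p ≤ b → b - p ∈ betaSet N γ := by
  intro b hb hpb
  by_contra hc
  obtain ⟨i, hiN, hfi⟩ := mem_betaSet.1 hb
  set B := betaSet N γ with hB
  set c := b - p with hcdef
  set j := ((Finset.range c).filter (fun y => y ∉ B)).card with hj
  set A := (B.filter (fun x => x < c)).card with hA
  -- j + A = c
  have hjA : j + A = c := by
    have h2 := Finset.card_filter_add_card_filter_not
      (s := Finset.range c) (p := (fun y => y ∈ B))
    simp only [Finset.card_range] at h2
    have heq : (Finset.range c).filter (fun y => y ∈ B) = B.filter (fun x => x < c) := by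
      ext y
      simp only [Finset.mem_filter, Finset.mem_range]
      tauto
    rw [heq] at h2
    omega
  have hcard : B.card = N := by rw [hB]; exact card_betaSet
  have hAN : A ≤ N := by
    have := Finset.card_le_card (Finset.filter_subset (fun x => x < c) B)
    omega
  have hconj : γ.conj j = (B.filter (fun x => c < x)).card := by
    have := conj_spec hN hc
    rw [← hB] at this
    exact this
  have hcnt : (B.filter (fun x => c < x)).card + A = N := by
    have h2 := Finset.card_filter_add_card_filter_not
      (s := B) (p := (fun x => c < x))
    rw [hcard] at h2
    have heq : B.filter (fun x => ¬ c < x) = B.filter (fun x => x < c) := by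
      apply Finset.filter_congr
      intro x hx
      have : x ≠ c := by rintro rfl; exact hc hx
      constructor <;> intro <;> omega
    rw [heq] at h2
    omega
  have hnode : j < γ.part i := by
    have hg := gap_charac (μ := γ) hc hj (γ.part i + (N - 1 - i))
    have hp2 := part_eq_gap_card (μ := γ) hiN
    rw [← hB] at hg hp2
    have : c < γ.part i + (N - 1 - i) := by omega
    have := hg.2 this
    omega
  have hhook : γ.hook i j = p := by
    rw [PartitionNat.hook, hconj]
    omega
  exact hγ i j hnode (hhook ▸ dvd_refl p)
/-- The set of maxima of the residue classes of a beta-set. -/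
def maxSet (p : ℕ) (B : Finset ℕ) : Finset ℕ := B.filter (fun m => m + p ∉ B)

section Closed

variable {B : Finset ℕ}

/-- closure under subtracting p -/
def Closed (p : ℕ) (B : Finset ℕ) : Prop := ∀ b ∈ B, p ≤ b → b - p ∈ B

lemma dvd_gap {p a b : ℕ} (hp : 0 < p) (h : a < b) (hd : p ∣ b - a) : a + p ≤ b := by
  obtain ⟨k, hk⟩ := hd
  rcases k with _ | n
  · omega
  · have : p ≤ p * (n+1) := Nat.le_mul_of_pos_right p (by omega)
    omega

lemma Closed.descend (hcl : Closed p B) (hp : 0 < p) {x m : ℕ} (hm : m ∈ B) (hx : x ≤ m)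
    (hmod : x % p = m % p) : x ∈ B := by
  have hdvd : p ∣ m - x := (Nat.modEq_iff_dvd' hx).mp hmod
  obtain ⟨k, hk⟩ := hdvd
  clear hmod
  suffices aux : ∀ k, ∀ m, m ∈ B → x ≤ m → m - x = p * k → x ∈ B from aux k m hm hx hk
  intro k
  induction k with
  | zero =>
    intro m hm hx hk
    have : m = x := by omega
    exact this ▸ hm
  | succ n ih =>
    intro m hm hx hk
    rw [Nat.mul_succ] at hk
    by_cases hxm : m = x
    · exact hxm ▸ hm
    · have h1 : p ≤ m := by omega
      exact ih (m - p) (hcl m hm h1) (by omega) (by omega)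

lemma max_unique (hcl : Closed p B) (hp : 0 < p) {m m' : ℕ}
    (hm : m ∈ maxSet p B) (hm' : m' ∈ maxSet p B) (hmod : m % p = m' % p) : m = m' := by
  simp only [maxSet, Finset.mem_filter] at hm hm'
  by_contra hne
  rcases Nat.lt_or_ge m m' with h | h
  · have hle : m + p ≤ m' :=
      dvd_gap hp h ((Nat.modEq_iff_dvd' (le_of_lt h)).mp hmod)
    refine hm.2 (hcl.descend hp hm'.1 hle ?_)
    rw [Nat.add_mod_right]
    exact hmod
  · have h' : m' < m := by omega
    have hle : m' + p ≤ m :=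
      dvd_gap hp h' ((Nat.modEq_iff_dvd' (le_of_lt h')).mp hmod.symm)
    refine hm'.2 (hcl.descend hp hm.1 hle ?_)
    rw [Nat.add_mod_right]
    exact hmod.symm

lemma close_eq (hp : 0 < p) {x y : ℕ} (hmod : x % p = y % p) (h1 : x ≤ y) (h2 : y < x + p) :
    x = y := by
  rcases Nat.lt_or_ge x y with h | h
  · have := dvd_gap hp h ((Nat.modEq_iff_dvd' h1).mp hmod)
    omega
  · omega

/-- The window-counting lemma. -/
lemma window_card (hcl : Closed p B) (hp : 0 < p) (u : ℕ) :
    (B.filter (fun x => u < x ∧ x < u + p)).card =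
      ((maxSet p B).filter (fun m => u < m ∧ ¬ m % p = u % p)).card := by
  symm
  apply Finset.card_bij (fun m _ => u + 1 + (m - u - 1) % p)
  · -- maps to
    rintro m hm
    simp only [Finset.mem_filter, maxSet] at hm
    obtain ⟨⟨hmB, hmp⟩, hum, hres⟩ := hm
    set w := u + 1 + (m - u - 1) % p with hw
    have hmod : w % p = m % p := by
      have h1 : u + 1 + (m - u - 1) = m := by omega
      calc w % p = (u + 1 + (m - u - 1)) % p := by rw [hw, Nat.add_mod_mod]
      _ = m % p := by rw [h1]
    have hwin : u < w ∧ w < u + p := by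
      constructor
      · omega
      · have h2 : (m - u - 1) % p < p := Nat.mod_lt _ hp
        rcases Nat.lt_or_ge ((m - u - 1) % p) (p - 1) with h3 | h3
        · omega
        · exfalso
          have h4 : (m - u - 1) % p = p - 1 := by omega
          have h5 : w = u + p := by omega
          apply hres
          rw [← hmod, h5]
          exact Nat.add_mod_right u p
    have hwB : w ∈ B := by
      rcases Nat.lt_or_ge m w with h' | h'
      · have : m = w := close_eq hp hmod.symm (by omega) (by omega)
        exact this ▸ hmB
      · exact hcl.descend hp hmB h' hmod
    simp only [Finset.mem_filter]
    exact ⟨hwB, hwin⟩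
  · -- injective
    rintro m1 hm1 m2 hm2 heq
    simp only [Finset.mem_filter, maxSet] at hm1 hm2
    have h1 : u + 1 + (m1 - u - 1) = m1 := by omega
    have h2 : u + 1 + (m2 - u - 1) = m2 := by omega
    have hmod1 : (u + 1 + (m1 - u - 1) % p) % p = m1 % p := by
      rw [Nat.add_mod_mod, h1]
    have hmod2 : (u + 1 + (m2 - u - 1) % p) % p = m2 % p := by
      rw [Nat.add_mod_mod, h2]
    have : m1 % p = m2 % p := by rw [← hmod1, ← hmod2, heq]
    exact max_unique hcl hp (by simp only [maxSet, Finset.mem_filter]; exact hm1.1)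
      (by simp only [maxSet, Finset.mem_filter]; exact hm2.1) this
  · -- surjective
    rintro x hx
    simp only [Finset.mem_filter] at hx
    obtain ⟨hxB, hux, hxu⟩ := hx
    have hne : (B.filter (fun y => y % p = x % p)).Nonempty :=
      ⟨x, Finset.mem_filter.2 ⟨hxB, rfl⟩⟩
    set m := (B.filter (fun y => y % p = x % p)).max' hne with hm
    have hmmem := (B.filter (fun y => y % p = x % p)).max'_mem hne
    simp only [Finset.mem_filter] at hmmem
    obtain ⟨hmB, hmres⟩ := hmmem
    have hxm : x ≤ m := by
      apply Finset.le_max'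
      exact Finset.mem_filter.2 ⟨hxB, rfl⟩
    have hmmax : m + p ∉ B := by
      intro hcon
      have : m + p ∈ B.filter (fun y => y % p = x % p) := by
        refine Finset.mem_filter.2 ⟨hcon, ?_⟩
        rw [Nat.add_mod_right]
        exact hmres
      have := Finset.le_max' _ _ this
      omega
    have hresu : ¬ m % p = u % p := by
      intro hcon
      have hxu' : ¬ x % p = u % p := by
        intro hcon2
        rcases Nat.lt_or_ge u x with h' | h'
        · have : u = x := close_eq hp hcon2.symm (by omega) (by omega)
          omega
        · omega
      exact hxu' (hmres ▸ hcon)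
    refine ⟨m, ?_, ?_⟩
    · simp only [Finset.mem_filter, maxSet]
      exact ⟨⟨hmB, hmmax⟩, by omega, hresu⟩
    · -- w(m) = x
      have h1 : u + 1 + (m - u - 1) = m := by omega
      have hmod : (u + 1 + (m - u - 1) % p) % p = m % p := by
        rw [Nat.add_mod_mod, h1]
      have hxmod : x % p = (u + 1 + (m - u - 1) % p) % p := by rw [hmod, hmres]
      have hwlt : u + 1 + (m - u - 1) % p < u + 1 + p := by
        have := Nat.mod_lt (m - u - 1) hp
        omega
    -- both x and w in (u, u+p], congruent mod p
      rcases Nat.lt_or_ge x (u + 1 + (m - u - 1) % p) with h' | h'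
      · exact (close_eq hp hxmod (by omega) (by omega)).symm
      · exact close_eq hp hxmod.symm h' (by omega)

variable {B : Finset ℕ}

lemma window_max (hcl : Closed p B) (hp : 0 < p) {c : ℕ} (hc : c ∈ maxSet p B) :
    (B.filter (fun x => c < x ∧ x < c + p)).card
      = ((maxSet p B).filter (fun m => c < m)).card := by
  rw [window_card hcl hp]
  congr 1
  apply Finset.filter_congr
  intro m hm
  constructor
  · tauto
  · intro h
    refine ⟨h, fun hres => ?_⟩
    have := max_unique hcl hp hm hc hres
    omega

lemma window_above (hcl : Closed p B) (hp : 0 < p) {c : ℕ} (hc : c ∈ maxSet p B) :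
    (B.filter (fun x => c + p < x ∧ x < c + p + p)).card
      = ((maxSet p B).filter (fun m => c + p < m)).card := by
  rw [window_card hcl hp]
  congr 1
  apply Finset.filter_congr
  intro m hm
  constructor
  · tauto
  · intro h
    refine ⟨h, fun hres => ?_⟩
    rw [Nat.add_mod_right] at hres
    have := max_unique hcl hp hm hc hres
    omega

lemma window_below (hcl : Closed p B) (hp : 0 < p) {c : ℕ} (hc : c ∈ maxSet p B)
    (hpc : p ≤ c) :
    (B.filter (fun x => c - p < x ∧ x < c)).card + 1
      = ((maxSet p B).filter (fun m => c - p < m)).card := by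
  have hwin := window_card hcl hp (B := B) (u := c - p)
  have hcp : c - p + p = c := by omega
  rw [hcp] at hwin
  have hcpmod : c % p = (c - p) % p := by
    conv_lhs => rw [← hcp]
    rw [Nat.add_mod_right]
  have herase : ((maxSet p B).filter (fun m => c - p < m ∧ ¬ m % p = (c - p) % p))
      = ((maxSet p B).filter (fun m => c - p < m)).erase c := by
    ext m
    simp only [Finset.mem_filter, Finset.mem_erase]
    constructor
    · rintro ⟨hm, h1, h2⟩
      refine ⟨fun hmc => h2 ?_, hm, h1⟩
      rw [hmc]
      exact hcpmod
    · rintro ⟨hne, hm, h1⟩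
      refine ⟨hm, h1, fun hres => hne ?_⟩
      have hres' : m % p = c % p := by
        rw [hres]
        exact hcpmod.symm
      exact max_unique hcl hp hm hc hres'
  rw [hwin, herase, Finset.card_erase_of_mem]
  · have hmem : c ∈ (maxSet p B).filter (fun m => c - p < m) := by
      refine Finset.mem_filter.2 ⟨hc, by omega⟩
    have := Finset.card_pos.2 ⟨c, hmem⟩
    omega
  · exact Finset.mem_filter.2 ⟨hc, by omega⟩

lemma gsplit {u v : ℕ} (huv : u ≤ v) (M : Finset ℕ) :
    (M.filter (fun m => u < m)).card
      = (M.filter (fun m => u < m ∧ m ≤ v)).card + (M.filter (fun m => v < m)).card := by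
  have h2 := Finset.card_filter_add_card_filter_not
    (s := M.filter (fun m => u < m)) (p := (fun m => m ≤ v))
  rw [Finset.filter_filter, Finset.filter_filter] at h2
  have hneg : M.filter (fun a => u < a ∧ ¬ a ≤ v) = M.filter (fun m => v < m) := by
    apply Finset.filter_congr
    intro m hm
    constructor <;> intro h <;> omega
  rw [hneg] at h2
  omega
/-- Sum of truncated parts of a beta-set. -/
def Fsum (t : ℕ) (S : Finset ℕ) : ℕ := ∑ x ∈ S, (x - t)

lemma sum_image_beta (μ : PartitionNat) (g : ℕ → ℕ) :
    ∑ x ∈ betaSet N μ, g x = ∑ i ∈ Finset.range N, g (μ.part i + (N - 1 - i)) := by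
  rw [betaSet]
  apply Finset.sum_image
  intro x hx y hy hxy
  exact beta_injOn (by simpa using hx) (by simpa using hy) hxy

lemma dom_of_F {lam mu : PartitionNat} (hlam : lam.len ≤ N) (hmu : mu.len ≤ N)
    (h : ∀ t, Fsum t (betaSet N lam) ≤ Fsum t (betaSet N mu)) : Dom lam mu := by
  have main : ∀ k, k ≤ N → ∑ i ∈ Finset.range k, lam.part i ≤ ∑ i ∈ Finset.range k, mu.part i := by
    intro k hk
    rcases Nat.eq_zero_or_pos k with rfl | hk0
    · simp
    set t := mu.part (k-1) + (N - k) with ht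
    have hFmu : Fsum t (betaSet N mu) = ∑ i ∈ Finset.range k, (mu.part i + (N - 1 - i) - t) := by
      rw [Fsum, sum_image_beta]
      rw [← Finset.sum_range_add_sum_Ico _ hk]
      have hzero : ∑ i ∈ Finset.Ico k N, (mu.part i + (N - 1 - i) - t) = 0 := by
        apply Finset.sum_eq_zero
        intro i hi
        simp only [Finset.mem_Ico] at hi
        have hlt := beta_lt (μ := mu) (N := N) (j := i) hi.2 (show k - 1 < i by omega)
        omega
      omega
    have hFlam : ∑ i ∈ Finset.range k, (lam.part i + (N - 1 - i) - t)
        ≤ Fsum t (betaSet N lam) := by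
      rw [Fsum, sum_image_beta]
      apply Finset.sum_le_sum_of_subset (Finset.range_subset_range.2 hk)
    have hmain := le_trans hFlam (le_trans (h t) (le_of_eq hFmu))
    have hμt : ∀ i ∈ Finset.range k, t ≤ mu.part i + (N - 1 - i) := by
      intro i hi
      simp only [Finset.mem_range] at hi
      rcases Nat.lt_or_ge i (k-1) with h' | h'
      · have hlt := beta_lt (μ := mu) (N := N) (i := i) (j := k - 1) (by omega) h'
        omega
      · have : i = k - 1 := by omega
        subst this
        omega
    have e1 : ∑ i ∈ Finset.range k, (mu.part i + (N - 1 - i) - t) + ∑ _i ∈ Finset.range k, t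
        = ∑ i ∈ Finset.range k, (mu.part i + (N - 1 - i)) := by
      rw [← Finset.sum_add_distrib]
      apply Finset.sum_congr rfl
      intro i hi
      have := hμt i hi
      omega
    have e2 : ∑ i ∈ Finset.range k, (lam.part i + (N - 1 - i))
        ≤ ∑ i ∈ Finset.range k, (lam.part i + (N - 1 - i) - t) + ∑ _i ∈ Finset.range k, t := by
      rw [← Finset.sum_add_distrib]
      apply Finset.sum_le_sum
      intro i hi
      omega
    have e4 : ∑ i ∈ Finset.range k, (lam.part i + (N - 1 - i))
        = ∑ i ∈ Finset.range k, lam.part i + ∑ i ∈ Finset.range k, (N - 1 - i) :=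
      Finset.sum_add_distrib
    have e5 : ∑ i ∈ Finset.range k, (mu.part i + (N - 1 - i))
        = ∑ i ∈ Finset.range k, mu.part i + ∑ i ∈ Finset.range k, (N - 1 - i) :=
      Finset.sum_add_distrib
    omega
  intro k
  rcases le_or_gt k N with hk | hk
  · exact main k hk
  · have h1 : ∑ i ∈ Finset.range N, lam.part i = ∑ i ∈ Finset.range k, lam.part i := by
      apply Finset.sum_subset (Finset.range_subset_range.2 hk.le)
      intro x _ hx
      simp only [Finset.mem_range] at hx
      push_neg at hx
      exact part_eq_zero lam hlam hx
    have h2 : ∑ i ∈ Finset.range N, mu.part i = ∑ i ∈ Finset.range k, mu.part i := by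
      apply Finset.sum_subset (Finset.range_subset_range.2 hk.le)
      intro x _ hx
      simp only [Finset.mem_range] at hx
      push_neg at hx
      exact part_eq_zero mu hmu hx
    rw [← h1, ← h2]
    exact main N le_rfl
def SpecA (p N : ℕ) (γ lam : PartitionNat) (l a b : ℕ) : Prop :=
  a ∈ maxSet p (betaSet N γ) ∧ b ∈ maxSet p (betaSet N γ) ∧ a < b ∧
  betaSet N lam = insert (a + p) (insert (b + p) (((betaSet N γ).erase a).erase b)) ∧
  l + (if b < a + p then 1 else 0)
    = ((maxSet p (betaSet N γ)).filter (fun m => a < m ∧ m ≤ b)).card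

def SpecBC (p N : ℕ) (γ lam : PartitionNat) (l a b : ℕ) : Prop :=
  b = a + p ∧ a ∈ betaSet N γ ∧ a + 2 * p ∉ betaSet N γ ∧
  betaSet N lam = insert (a + 2 * p) ((betaSet N γ).erase a) ∧
  l = ((maxSet p (betaSet N γ)).filter (fun m => a < m ∧ m < a + p)).card

def Spec (p N : ℕ) (γ lam : PartitionNat) (l a b : ℕ) : Prop :=
  lam.len ≤ N ∧ (SpecA p N γ lam l a b ∨ SpecBC p N γ lam l a b)

lemma max_ne_add (hp : 0 < p) {γ : PartitionNat} (hcl : Closed p (betaSet N γ)) {a b : ℕ}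
    (ha : a ∈ maxSet p (betaSet N γ)) (hb : b ∈ maxSet p (betaSet N γ)) (hab : a ≠ b) :
    a + p ≠ b := by
  intro hcon
  apply hab
  apply max_unique hcl hp ha hb
  rw [← hcon, Nat.add_mod_right]

lemma Fsum_spec {γ lam : PartitionNat} {l a b : ℕ} (hp : 0 < p)
    (hcl : Closed p (betaSet N γ)) (hs : Spec p N γ lam l a b) (t : ℕ) :
    Fsum t (betaSet N lam) + (a - t) + (b - t)
      = Fsum t (betaSet N γ) + (a + p - t) + (b + p - t) := by
  obtain ⟨hlen, hA | hBC⟩ := hs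
  · obtain ⟨ha, hb, hab, heq, -⟩ := hA
    have haB : a ∈ betaSet N γ := (Finset.mem_filter.1 ha).1
    have hbB : b ∈ betaSet N γ := (Finset.mem_filter.1 hb).1
    have hapB : a + p ∉ betaSet N γ := (Finset.mem_filter.1 ha).2
    have hbpB : b + p ∉ betaSet N γ := (Finset.mem_filter.1 hb).2
    have hab' : a ≠ b := by omega
    have hapb : a + p ≠ b := max_ne_add hp hcl ha hb hab'
    set S := ((betaSet N γ).erase a).erase b with hS
    have hSsub : S ⊆ betaSet N γ := by
      intro x hx
      exact Finset.mem_of_mem_erase (Finset.mem_of_mem_erase hx)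
    have h1 : Fsum t (betaSet N lam)
        = (a + p - t) + ((b + p - t) + Fsum t S) := by
      rw [Fsum, heq, Finset.sum_insert, Finset.sum_insert]
      · rfl
      · intro hcon
        exact hbpB (hSsub hcon)
      · intro hcon
        rcases Finset.mem_insert.1 hcon with h' | h'
        · omega
        · exact hapB (hSsub h')
    have h2 : Fsum t S + (b - t) + (a - t) = Fsum t (betaSet N γ) := by
      rw [Fsum, Fsum]
      have s1 : ∑ x ∈ S, (x - t) + (b - t) = ∑ x ∈ (betaSet N γ).erase a, (x - t) := by
        rw [hS]
        exact Finset.sum_erase_add _ _ (Finset.mem_erase.2 ⟨by omega, hbB⟩)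
      have s2 : ∑ x ∈ (betaSet N γ).erase a, (x - t) + (a - t)
          = ∑ x ∈ betaSet N γ, (x - t) := Finset.sum_erase_add _ _ haB
      omega
    omega
  · obtain ⟨hb, haB, ha2p, heq, -⟩ := hBC
    have ha2p' : a + 2 * p ∉ (betaSet N γ).erase a := fun hcon =>
      ha2p (Finset.mem_of_mem_erase hcon)
    have h1 : Fsum t (betaSet N lam) = (a + 2 * p - t) + Fsum t ((betaSet N γ).erase a) := by
      rw [Fsum, heq, Finset.sum_insert ha2p']
      rfl
    have h2 : Fsum t ((betaSet N γ).erase a) + (a - t) = Fsum t (betaSet N γ) :=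
      Finset.sum_erase_add _ _ haB
    subst hb
    omega
lemma no_interleave {γ lam mu : PartitionNat} {l a b a' b' : ℕ} (hp : 0 < p)
    (h1 : SpecA p N γ lam l a b ∨ SpecBC p N γ lam l a b)
    (h2 : SpecA p N γ mu l a' b' ∨ SpecBC p N γ mu l a' b')
    (hxa : a < a') (hxb : b' < b) : False := by
  rcases h1 with ⟨ha, hb, hab, -, leq1⟩ | ⟨hbeq, -, -, -, leq1⟩ <;>
    rcases h2 with ⟨ha', hb', hab', -, leq2⟩ | ⟨hbeq', -, -, -, leq2⟩
  · -- A vs A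
    have hsub : insert a' (insert b ((maxSet p (betaSet N γ)).filter (fun m => a' < m ∧ m ≤ b')))
        ⊆ (maxSet p (betaSet N γ)).filter (fun m => a < m ∧ m ≤ b) := by
      intro m hm
      rcases Finset.mem_insert.1 hm with rfl | hm'
      · exact Finset.mem_filter.2 ⟨ha', by omega, by omega⟩
      rcases Finset.mem_insert.1 hm' with rfl | hm''
      · exact Finset.mem_filter.2 ⟨hb, by omega, le_rfl⟩
      · have := Finset.mem_filter.1 hm''
        exact Finset.mem_filter.2 ⟨this.1, by omega, by omega⟩
    have hni1 : b ∉ (maxSet p (betaSet N γ)).filter (fun m => a' < m ∧ m ≤ b') := by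
      intro hcon
      have := Finset.mem_filter.1 hcon
      omega
    have hni2 : a' ∉ insert b ((maxSet p (betaSet N γ)).filter (fun m => a' < m ∧ m ≤ b')) := by
      intro hcon
      rcases Finset.mem_insert.1 hcon with h' | h'
      · omega
      · have := Finset.mem_filter.1 h'
        omega
    have hcard := Finset.card_le_card hsub
    rw [Finset.card_insert_of_notMem hni2, Finset.card_insert_of_notMem hni1] at hcard
    have hind1 : (if b < a + p then 1 else 0) ≤ 1 := by split <;> omega
    have hind2 : 0 ≤ (if b' < a' + p then 1 else 0) := by omega
    omega
  · -- A vs BC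
    subst hbeq'
    have hsub : insert b ((maxSet p (betaSet N γ)).filter (fun m => a' < m ∧ m < a' + p))
        ⊆ (maxSet p (betaSet N γ)).filter (fun m => a < m ∧ m ≤ b) := by
      intro m hm
      rcases Finset.mem_insert.1 hm with rfl | hm'
      · exact Finset.mem_filter.2 ⟨hb, by omega, le_rfl⟩
      · have := Finset.mem_filter.1 hm'
        exact Finset.mem_filter.2 ⟨this.1, by omega, by omega⟩
    have hni : b ∉ (maxSet p (betaSet N γ)).filter (fun m => a' < m ∧ m < a' + p) := by
      intro hcon
      have := Finset.mem_filter.1 hcon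
      omega
    have hcard := Finset.card_le_card hsub
    rw [Finset.card_insert_of_notMem hni] at hcard
    rw [if_neg (show ¬ b < a + p by omega)] at leq1
    omega
  · -- BC vs A
    subst hbeq
    have hsub : insert a' ((maxSet p (betaSet N γ)).filter (fun m => a' < m ∧ m ≤ b'))
        ⊆ (maxSet p (betaSet N γ)).filter (fun m => a < m ∧ m < a + p) := by
      intro m hm
      rcases Finset.mem_insert.1 hm with rfl | hm'
      · exact Finset.mem_filter.2 ⟨ha', by omega, by omega⟩
      · have := Finset.mem_filter.1 hm'
        exact Finset.mem_filter.2 ⟨this.1, by omega, by omega⟩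
    have hni : a' ∉ (maxSet p (betaSet N γ)).filter (fun m => a' < m ∧ m ≤ b') := by
      intro hcon
      have := Finset.mem_filter.1 hcon
      omega
    have hcard := Finset.card_le_card hsub
    rw [Finset.card_insert_of_notMem hni] at hcard
    have hind2 : (if b' < a' + p then 1 else 0) ≤ 1 := by split <;> omega
    omega
  · -- BC vs BC
    omega

lemma compare_spec {γ lam mu : PartitionNat} {l a b a' b' : ℕ} (hp : 0 < p)
    (hcl : Closed p (betaSet N γ))
    (h1 : Spec p N γ lam l a b) (h2 : Spec p N γ mu l a' b') :
    Dom lam mu ∨ Dom mu lam := by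
  have hid1 := Fsum_spec hp hcl h1
  have hid2 := Fsum_spec hp hcl h2
  by_cases hc1 : a ≤ a' ∧ b ≤ b'
  · left
    apply dom_of_F h1.1 h2.1
    intro t
    have e1 := hid1 t
    have e2 := hid2 t
    omega
  by_cases hc2 : a' ≤ a ∧ b' ≤ b
  · right
    apply dom_of_F h2.1 h1.1
    intro t
    have e1 := hid1 t
    have e2 := hid2 t
    omega
  exfalso
  have hint : (a < a' ∧ b' < b) ∨ (a' < a ∧ b < b') := by
    rcases Nat.lt_or_ge a a' with h | h
    · rcases Nat.lt_or_ge b' b with h' | h'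
      · exact Or.inl ⟨h, h'⟩
      · exact absurd ⟨by omega, by omega⟩ hc1
    · rcases Nat.lt_or_ge b b' with h' | h'
      · rcases Nat.lt_or_ge a' a with h'' | h''
        · exact Or.inr ⟨h'', h'⟩
        · exact absurd ⟨by omega, by omega⟩ hc1
      · exact absurd ⟨by omega, by omega⟩ hc2
  rcases hint with ⟨hxa, hxb⟩ | ⟨hxa, hxb⟩
  · exact no_interleave hp h1.2 h2.2 hxa hxb
  · exact no_interleave hp h2.2 h1.2 hxa hxb
lemma extract {γ lam : PartitionNat} {l : ℕ} (hp : 0 < p) (hγ : IsCore p γ)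
    (h : DelClass p γ l lam) :
    ∃ N0, ∀ N, N0 ≤ N → γ.len ≤ N ∧ ∃ a b, Spec p N γ lam l a b := by
  obtain ⟨-, mu, l1, l2, hr1, hr2, hl⟩ := h
  obtain ⟨N1, b1, hd1⟩ := removeHook_iff.1 hr1
  obtain ⟨N2, b2, hd2⟩ := removeHook_iff.1 hr2
  refine ⟨max N1 N2, fun N hN => ?_⟩
  obtain ⟨b1', hc1⟩ := hd1.mono hp N (le_trans (le_max_left _ _) hN)
  obtain ⟨b2', hc2⟩ := hd2.mono hp N (le_trans (le_max_right _ _) hN)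
  clear hd1 hd2 hr1 hr2
  obtain ⟨hlenlam, hlenmu, hb1mem, hpb1, hb1not, heq1, hl1⟩ := hc1
  obtain ⟨hlenmu', hlenγ, hb2mem, hpb2, hb2not, heq2, hl2⟩ := hc2
  refine ⟨hlenγ, ?_⟩
  have hcl : Closed p (betaSet N γ) := betaSet_closed hp hγ hlenγ
  obtain ⟨c, rfl⟩ : ∃ c, b2' = c + p := ⟨b2' - p, by omega⟩
  obtain ⟨d, rfl⟩ : ∃ d, b1' = d + p := ⟨b1' - p, by omega⟩
  rw [Nat.add_sub_cancel] at heq1 heq2 hl1 hl2 hb1not hb2not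
  -- structure of the second removal
  have hcB : c ∈ betaSet N γ := by rw [heq2]; exact Finset.mem_insert_self _ _
  have hcpγ : c + p ∉ betaSet N γ := by
    rw [heq2]
    intro hcon
    rcases Finset.mem_insert.1 hcon with h' | h'
    · omega
    · rw [Finset.mem_sdiff, Finset.mem_singleton] at h'
      exact h'.2 rfl
  have hcmax : c ∈ maxSet p (betaSet N γ) := Finset.mem_filter.2 ⟨hcB, hcpγ⟩
  have hmueq : betaSet N mu = insert (c + p) ((betaSet N γ).erase c) := by
    ext x
    rw [Finset.mem_insert, Finset.mem_erase]
    constructor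
    · intro hx
      by_cases hxc : x = c + p
      · exact Or.inl hxc
      · refine Or.inr ⟨?_, ?_⟩
        · intro hxc'
          rw [hxc'] at hx
          exact hb2not hx
        · rw [heq2, Finset.mem_insert, Finset.mem_sdiff, Finset.mem_singleton]
          exact Or.inr ⟨hx, hxc⟩
    · rintro (rfl | ⟨hxc, hxγ⟩)
      · exact hb2mem
      · rw [heq2, Finset.mem_insert, Finset.mem_sdiff, Finset.mem_singleton] at hxγ
        rcases hxγ with h' | h'
        · exact absurd h' hxc
        · exact h'.1
  -- structure of the first removal
  have hdmu : d ∈ betaSet N mu := by rw [heq1]; exact Finset.mem_insert_self _ _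
  have hdpmu : d + p ∉ betaSet N mu := by
    rw [heq1]
    intro hcon
    rcases Finset.mem_insert.1 hcon with h' | h'
    · omega
    · rw [Finset.mem_sdiff, Finset.mem_singleton] at h'
      exact h'.2 rfl
  have hlameq : betaSet N lam = insert (d + p) ((betaSet N mu).erase d) := by
    ext x
    rw [Finset.mem_insert, Finset.mem_erase]
    constructor
    · intro hx
      by_cases hxd : x = d + p
      · exact Or.inl hxd
      · refine Or.inr ⟨?_, ?_⟩
        · intro hxd'
          rw [hxd'] at hx
          exact hb1not hx
        · rw [heq1, Finset.mem_insert, Finset.mem_sdiff, Finset.mem_singleton]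
          exact Or.inr ⟨hx, hxd⟩
    · rintro (rfl | ⟨hxd, hxmu⟩)
      · exact hb1mem
      · rw [heq1, Finset.mem_insert, Finset.mem_sdiff, Finset.mem_singleton] at hxmu
        rcases hxmu with h' | h'
        · exact absurd h' hxd
        · exact h'.1
  -- common: value of l2
  have hl2' : l2 = ((betaSet N γ).filter (fun x => c < x ∧ x < c + p)).card := by
    rw [hl2, hmueq, Finset.filter_insert, if_neg (by omega), Finset.filter_erase,
      Finset.erase_eq_of_notMem]
    intro hcon
    have := (Finset.mem_filter.1 hcon).2
    omega
  have hgc := window_max hcl hp hcmax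
  -- case analysis on d
  by_cases hcase1 : d = c + p
  · -- type ⟨i⟩
    subst hcase1
    have hlam2 : betaSet N lam = insert (c + 2 * p) ((betaSet N γ).erase c) := by
      rw [hlameq, hmueq, Finset.erase_insert, show c + p + p = c + 2 * p by omega]
      intro hcon
      exact hcpγ (Finset.mem_of_mem_erase hcon)
    have h2pγ : c + 2 * p ∉ betaSet N γ := by
      intro hcon
      have := hcl _ hcon (by omega)
      rw [show c + 2 * p - p = c + p by omega] at this
      exact hcpγ this
    have hl1' : l1 = ((betaSet N γ).filter (fun x => c + p < x ∧ x < c + p + p)).card := by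
      rw [hl1, hlam2, Finset.filter_insert, if_neg (by omega), Finset.filter_erase,
        Finset.erase_eq_of_notMem]
      intro hcon
      have := (Finset.mem_filter.1 hcon).2
      omega
    have hgcp := window_above hcl hp hcmax
    have hsplit := gsplit (show c ≤ c + p by omega) (maxSet p (betaSet N γ))
    have hfeq : (maxSet p (betaSet N γ)).filter (fun m => c < m ∧ m ≤ c + p)
        = (maxSet p (betaSet N γ)).filter (fun m => c < m ∧ m < c + p) := by
      apply Finset.filter_congr
      intro m hm
      have hmB : m ∈ betaSet N γ := (Finset.mem_filter.1 hm).1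
      have : m ≠ c + p := fun hcon => hcpγ (hcon ▸ hmB)
      constructor <;> intro h' <;> [exact ⟨h'.1, by omega⟩; exact ⟨h'.1, by omega⟩]
    refine ⟨c, c + p, hlenlam, Or.inr ⟨rfl, hcB, h2pγ, hlam2, ?_⟩⟩
    rw [hfeq] at hsplit
    omega
  · by_cases hcase2 : d + p = c
    · -- type ⟨i²⟩
      have hceq : c = d + p := hcase2.symm
      subst hceq
      have hdB : d ∈ betaSet N γ := by
        have hdmu' := hdmu
        rw [hmueq, Finset.mem_insert, Finset.mem_erase] at hdmu'
        rcases hdmu' with h' | h'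
        · omega
        · exact h'.2
      have hlam2 : betaSet N lam = insert (d + 2 * p) ((betaSet N γ).erase d) := by
        rw [hlameq, hmueq]
        ext x
        simp only [Finset.mem_insert, Finset.mem_erase]
        constructor
        · rintro (rfl | ⟨hxd, (rfl | ⟨hxdp, hxγ⟩)⟩)
          · exact Or.inr ⟨by omega, hcB⟩
          · exact Or.inl (by omega)
          · exact Or.inr ⟨hxd, hxγ⟩
        · rintro (rfl | ⟨hxd, hxγ⟩)
          · exact Or.inr ⟨by omega, Or.inl (by omega)⟩
          · by_cases hxdp : x = d + p
            · exact Or.inl hxdp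
            · exact Or.inr ⟨hxd, Or.inr ⟨hxdp, hxγ⟩⟩
      have h2pγ : d + 2 * p ∉ betaSet N γ := by
        rw [show d + 2 * p = d + p + p by omega]
        exact hcpγ
      have hl1' : l1 = ((betaSet N γ).filter (fun x => d < x ∧ x < d + p)).card := by
        rw [hl1, hlam2, Finset.filter_insert, if_neg (by omega), Finset.filter_erase,
          Finset.erase_eq_of_notMem]
        intro hcon
        have := (Finset.mem_filter.1 hcon).2
        omega
      have hbelow := window_below hcl hp hcmax (by omega)
      rw [Nat.add_sub_cancel] at hbelow
      have hsplit := gsplit (show d ≤ d + p by omega) (maxSet p (betaSet N γ))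
      have hfeq : (maxSet p (betaSet N γ)).filter (fun m => d < m ∧ m ≤ d + p)
          = insert (d + p) ((maxSet p (betaSet N γ)).filter (fun m => d < m ∧ m < d + p)) := by
        ext m
        rw [Finset.mem_insert, Finset.mem_filter, Finset.mem_filter]
        constructor
        · rintro ⟨hm, h1', h2'⟩
          by_cases hmc : m = d + p
          · exact Or.inl hmc
          · exact Or.inr ⟨hm, h1', by omega⟩
        · rintro (rfl | ⟨hm, h1', h2'⟩)
          · exact ⟨hcmax, by omega, le_rfl⟩
          · exact ⟨hm, h1', by omega⟩
      have hcardins : ((maxSet p (betaSet N γ)).filter (fun m => d < m ∧ m ≤ d + p)).card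
          = ((maxSet p (betaSet N γ)).filter (fun m => d < m ∧ m < d + p)).card + 1 := by
        rw [hfeq, Finset.card_insert_of_notMem]
        intro hcon
        have := (Finset.mem_filter.1 hcon).2
        omega
      refine ⟨d, d + p, hlenlam, Or.inr ⟨rfl, hdB, h2pγ, hlam2, ?_⟩⟩
      omega
    · -- type ⟨i,j⟩
      have hdc : d ≠ c := by
        intro hcon
        rw [hcon] at hdmu
        exact hb2not hdmu
      have hdB : d ∈ betaSet N γ := by
        have hdmu' := hdmu
        rw [hmueq, Finset.mem_insert, Finset.mem_erase] at hdmu'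
        rcases hdmu' with h' | h'
        · exact absurd h' hcase1
        · exact h'.2
      have hdpγ : d + p ∉ betaSet N γ := by
        intro hcon
        apply hdpmu
        rw [hmueq, Finset.mem_insert, Finset.mem_erase]
        exact Or.inr ⟨fun h' => hcase2 h', hcon⟩
      have hdmax : d ∈ maxSet p (betaSet N γ) := Finset.mem_filter.2 ⟨hdB, hdpγ⟩
      have hlam2 : betaSet N lam
          = insert (d + p) (insert (c + p) (((betaSet N γ).erase c).erase d)) := by
        rw [hlameq, hmueq, Finset.erase_insert_of_ne (by omega)]
      have hgd := window_max hcl hp hdmax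
      -- compute l1 by cases
      rcases lt_or_gt_of_ne hdc with hdlt | hclt
      · -- d < c : a := d, b := c
        have hl1' : l1 + (if c < d + p then 1 else 0)
            = ((betaSet N γ).filter (fun x => d < x ∧ x < d + p)).card := by
          rw [hl1, hlam2, Finset.filter_insert, if_neg (by omega),
            Finset.filter_insert, if_neg (by omega), Finset.filter_erase,
            Finset.filter_erase]
          rw [Finset.erase_eq_of_notMem (a := d) (fun hcon => by
            have := (Finset.mem_filter.1 (Finset.mem_of_mem_erase hcon)).2
            omega)]
          by_cases hcwin : c < d + p
          · rw [if_pos hcwin, Finset.card_erase_of_mem]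
            · have hcmemf : c ∈ (betaSet N γ).filter (fun x => d < x ∧ x < d + p) :=
                Finset.mem_filter.2 ⟨hcB, hdlt, hcwin⟩
              have := Finset.card_pos.2 ⟨c, hcmemf⟩
              omega
            · exact Finset.mem_filter.2 ⟨hcB, hdlt, hcwin⟩
          · rw [if_neg hcwin, Finset.erase_eq_of_notMem (fun hcon => by
              have := (Finset.mem_filter.1 hcon).2
              omega : c ∉ (betaSet N γ).filter (fun x => d < x ∧ x < d + p))]
            omega
        have hsplit := gsplit (le_of_lt hdlt) (maxSet p (betaSet N γ))
        have hDpos : 0 < ((maxSet p (betaSet N γ)).filter (fun m => d < m ∧ m ≤ c)).card :=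
          Finset.card_pos.2 ⟨c, Finset.mem_filter.2 ⟨hcmax, hdlt, le_rfl⟩⟩
        refine ⟨d, c, hlenlam, Or.inl ⟨hdmax, hcmax, hdlt, ?_, ?_⟩⟩
        · have herc : ((betaSet N γ).erase c).erase d = ((betaSet N γ).erase d).erase c :=
            Finset.erase_right_comm
          rw [hlam2, herc]
        · have hind : (if c < d + p then 1 else 0) ≤ 1 := by split <;> omega
          omega
      · -- c < d : a := c, b := d
        have hl1' : l1 = ((betaSet N γ).filter (fun x => d < x ∧ x < d + p)).card
            + (if d < c + p then 1 else 0) := by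
          rw [hl1, hlam2, Finset.filter_insert, if_neg (by omega)]
          rw [Finset.filter_insert]
          have hfilYeq : Finset.filter (fun x => d < x ∧ x < d + p)
                (((betaSet N γ).erase c).erase d)
              = (betaSet N γ).filter (fun x => d < x ∧ x < d + p) := by
            rw [Finset.filter_erase, Finset.filter_erase]
            rw [Finset.erase_eq_of_notMem (a := d) (fun hcon => by
              have := (Finset.mem_filter.1 (Finset.mem_of_mem_erase hcon)).2
              omega)]
            rw [Finset.erase_eq_of_notMem]
            intro hcon
            have := (Finset.mem_filter.1 hcon).2
            omega
          by_cases hcwin : d < c + p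
          · rw [if_pos (by omega), hfilYeq, Finset.card_insert_of_notMem, if_pos hcwin]
            intro hcon
            exact hcpγ (Finset.mem_filter.1 hcon).1
          · rw [if_neg (by omega), hfilYeq, if_neg hcwin]
            omega
        have hsplit := gsplit (le_of_lt hclt) (maxSet p (betaSet N γ))
        have hDpos : 0 < ((maxSet p (betaSet N γ)).filter (fun m => c < m ∧ m ≤ d)).card :=
          Finset.card_pos.2 ⟨d, Finset.mem_filter.2 ⟨hdmax, hclt, le_rfl⟩⟩
        have hlam3 : betaSet N lam
            = insert (c + p) (insert (d + p) (((betaSet N γ).erase c).erase d)) := by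
          rw [hlam2, Finset.insert_comm]
        refine ⟨c, d, hlenlam, Or.inl ⟨hcmax, hdmax, hclt, hlam3, ?_⟩⟩
        have hind : (if d < c + p then 1 else 0) ≤ 1 := by split <;> omega
        omega
end Closed

end Dev

/-- each set `∂_l` (`0 ≤ l ≤ p−1`) is totally ordered by the
dominance order. -/
theorem stmt10 (p : ℕ) (hp : p.Prime) (hodd : Odd p)
    (γ : PartitionNat) (hγ : IsCore p γ) (hsc : SelfConj γ) :
    ∀ l, l ≤ p - 1 → ∀ lam mu : PartitionNat,
      DelClass p γ l lam → DelClass p γ l mu → Dom lam mu ∨ Dom mu lam := by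
  intro l _hl lam mu h1 h2
  have hp0 : 0 < p := hp.pos
  obtain ⟨Na, hA⟩ := extract hp0 hγ h1
  obtain ⟨Nb, hB⟩ := extract hp0 hγ h2
  obtain ⟨hlenγ, a, b, hs1⟩ := hA (max Na Nb) (le_max_left _ _)
  obtain ⟨-, a', b', hs2⟩ := hB (max Na Nb) (le_max_right _ _)
  exact compare_spec hp0 (betaSet_closed hp0 hγ hlenγ) hs1 hs2

end ArxivW2
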